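/- If an oriented graph B has the directed Sidorenko property, then there exists a homomorphism from B to K2→ (the oriented graph with two vertices and a single directed edge). -/
import Mathlib


open MeasureTheory Filter Topology

/-- Homomorphism density between finite directed graphs: the number of maps
`V(A) → V(G)` that are homomorphisms, divided by `v(G)^{v(A)}`. -/
noncomputable def homDensity {α β : Type} [Fintype α] [Fintype β]
    (A : α → α → Prop) (G : β → β → Prop) : ℝ :=
  (Nat.card {f : α → β // ∀ x y, A x y → G (f x) (f y)} : ℝ) /
    (Fintype.card β : ℝ) ^ (Fintype.card α)

/-- Number of edges of a directed graph. -/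
noncomputable def edgeCount {α : Type} [Fintype α] (A : α → α → Prop) : ℕ :=
  Nat.card {p : α × α // A p.1 p.2}

/-- The oriented graph `K2→`: two vertices, one directed edge. -/
def K2dir : Fin 2 → Fin 2 → Prop := fun i j => i = 0 ∧ j = 1

/-- A directed graph is an oriented graph: no self-loops and, for each pair of
distinct vertices, at most one of the two possible directed edges. -/
def IsOriented {α : Type} (A : α → α → Prop) : Prop :=
  (∀ x, ¬ A x x) ∧ ∀ x y, A x y → ¬ A y x

open Classical in
/-- Graphon homomorphism density of a directed graph `A` in `W`:
`t(A, W) = ∫_{[0,1]^{V(A)}} ∏_{(i,j) ∈ E(A)} W(x_i, x_j) ∏ dx_i`. -/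
noncomputable def graphonDensity {α : Type} [Fintype α]
    (A : α → α → Prop) (W : ℝ → ℝ → ℝ) : ℝ :=
  ∫ x : α → ℝ in Set.univ.pi fun _ => Set.Icc (0:ℝ) 1,
    ∏ p : α × α, if A p.1 p.2 then W (x p.1) (x p.2) else 1

/-- The directed Sidorenko property: `t(B, G) ≥ t(K2→, G)^{e(B)}` for every
(nonempty) oriented graph `G`. -/
def DirSidorenko {β : Type} [Fintype β] (B : β → β → Prop) : Prop :=
  ∀ (n : ℕ), 0 < n → ∀ G : Fin n → Fin n → Prop, IsOriented G →
    homDensity B G ≥ homDensity K2dir G ^ edgeCount B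

/-- If an oriented graph `B` has the directed Sidorenko property,
then there is a homomorphism `B → K2→`. -/
theorem dirSidorenko_implies_hom_to_K2
    {β : Type} [Fintype β] (B : β → β → Prop) (hB : IsOriented B)
    (h : DirSidorenko B) :
    ∃ f : β → Fin 2, ∀ x y, B x y → K2dir (f x) (f y) := by
  by_contra hc
  have hK2 : IsOriented K2dir := by
    constructor
    · intro x ⟨h1, h2⟩; rw [h1] at h2; exact absurd h2 (by decide)
    · rintro x y ⟨h1, h2⟩ ⟨h3, h4⟩; rw [h2] at h3; exact absurd h3 (by decide)
  have hs := h 2 (by norm_num) K2dir hK2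
  -- the hom set from B is empty
  have hempty : IsEmpty {f : β → Fin 2 // ∀ x y, B x y → K2dir (f x) (f y)} := by
    constructor; rintro ⟨f, hf⟩; exact hc ⟨f, hf⟩
  have hzero : homDensity B K2dir = 0 := by
    unfold homDensity
    rw [Nat.card_of_isEmpty]
    simp
  -- identity is a hom K2dir → K2dir
  have hne : Nonempty {f : Fin 2 → Fin 2 // ∀ x y, K2dir x y → K2dir (f x) (f y)} :=
    ⟨⟨id, fun x y hxy => hxy⟩⟩
  have hpos : 0 < homDensity K2dir K2dir := by
    unfold homDensity
    apply div_pos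
    · exact_mod_cast Nat.card_pos
    · norm_num
  have : (0:ℝ) < homDensity K2dir K2dir ^ edgeCount B := pow_pos hpos _
  rw [hzero] at hs
  linarith
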